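/- Let A be a diagonal operator on ℓ²(ℤ^d) with real diagonal entries λ_k satisfying |λ_k - λ_ℓ| ≤ π - δ for some δ > 0 and all k, ℓ, and let V be a bounded matrix with ‖V‖_α < ∞ for α > d. Then the series Z₁ = Σ_{k≥0} (B_k/k!) i^k ad_A^k(V), where ad_A(W) = AW - WA, converges absolutely in the norm ‖·‖_α and its entries are given by (Z₁)_{kℓ} = V_{kℓ} · i(λ_k - λ_ℓ)/(e^{i(λ_k - λ_ℓ)} - 1) (with the convention that the factor equals 1 when λ_k = λ_ℓ). -/

import Mathlib

open Real Finset

lemma bern_bound (n : ℕ) :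
    |((bernoulli n : ℚ) : ℝ)| / (Nat.factorial n : ℝ) ≤ 4 / (2 * Real.pi) ^ n := by
  have hpi : (0:ℝ) < Real.pi := Real.pi_pos
  match n with
  | 0 => simp [bernoulli_zero]
  | 1 =>
      have : Real.pi ≤ 4 := Real.pi_le_four
      simp only [bernoulli_one, Nat.factorial_one, pow_one]
      rw [div_le_div_iff₀ (by norm_num) (by positivity)]
      push_cast
      rw [abs_of_nonpos (by norm_num)]
      nlinarith
  | (m+2) =>
      rcases Nat.even_or_odd (m+2) with he | ho
      · obtain ⟨k, hk⟩ := he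
        have hk' : m + 2 = 2 * k := by omega
        have hk0 : k ≠ 0 := by omega
        have hz := hasSum_zeta_nat hk0
        set S : ℝ := (-1 : ℝ) ^ (k + 1) * (2:ℝ) ^ (2 * k - 1) * Real.pi ^ (2 * k) *
          ((bernoulli (2 * k) : ℚ) : ℝ) / ((2 * k).factorial : ℝ) with hS
        have hS0 : 0 ≤ S := hz.nonneg (fun i => by positivity)
        have hS2 : S ≤ 2 := by
          have h2 : S ≤ Real.pi ^ 2 / 6 := by
            refine hasSum_le (fun i => ?_) hz hasSum_zeta_two
            rcases Nat.eq_zero_or_pos i with h | h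
            · subst h
              norm_num [zero_pow (show 2*k ≠ 0 by omega)]
            · apply one_div_le_one_div_of_le (by positivity)
              exact pow_le_pow_right₀ (by exact_mod_cast h) (by omega)
          nlinarith [Real.pi_lt_d2]
        have hF : (0:ℝ) < ((2*k).factorial : ℝ) := by positivity
        have habs : |S| = (2:ℝ) ^ (2 * k - 1) * Real.pi ^ (2 * k) *
            |((bernoulli (2 * k) : ℚ) : ℝ)| / ((2 * k).factorial : ℝ) := by
          rw [hS]
          simp [abs_mul, abs_div, abs_pow, abs_of_pos hpi, Nat.abs_cast]
        have hcb : (2:ℝ) ^ (2 * k - 1) * Real.pi ^ (2 * k) * |((bernoulli (2 * k) : ℚ) : ℝ)|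
            ≤ 2 * ((2*k).factorial : ℝ) := by
          have h1 : |S| ≤ 2 := by rw [abs_of_nonneg hS0]; exact hS2
          rw [habs, div_le_iff₀ hF] at h1
          linarith
        have h2c : (2 * Real.pi) ^ (2*k) = 2 * ((2:ℝ) ^ (2 * k - 1) * Real.pi ^ (2 * k)) := by
          have h4 : (2:ℝ)^(2*k) = 2 * 2^(2*k-1) := by
            conv_lhs => rw [show 2*k = (2*k-1)+1 from by omega, pow_succ]
            ring
          rw [mul_pow, h4]
          ring
        rw [hk', div_le_div_iff₀ hF (by positivity), h2c]
        nlinarith [abs_nonneg ((bernoulli (2*k) : ℚ) : ℝ)]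
      · have hb : bernoulli (m+2) = 0 := by
          rw [bernoulli_eq_bernoulli'_of_ne_one (by omega)]
          exact bernoulli'_eq_zero_of_odd ho (by omega)
        rw [hb]
        simp
        positivity

noncomputable def bcoef (n : ℕ) : ℂ := ((bernoulli n : ℚ) : ℂ) / (Nat.factorial n)

lemma bcoef_norm (n : ℕ) : ‖bcoef n‖ ≤ 4 / (2 * Real.pi) ^ n := by
  rw [bcoef, norm_div, Complex.norm_ratCast, Complex.norm_natCast]
  exact_mod_cast bern_bound n

lemma summable_bern_norm (z : ℂ) (hz : ‖z‖ < 2 * Real.pi) :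
    Summable (fun n : ℕ => ‖bcoef n * z ^ n‖) := by
  have hpi : (0:ℝ) < Real.pi := Real.pi_pos
  have hρ0 : 0 ≤ ‖z‖ / (2 * Real.pi) := by positivity
  have hρ1 : ‖z‖ / (2 * Real.pi) < 1 := by
    rw [div_lt_one (by positivity)]; exact hz
  refine Summable.of_nonneg_of_le (fun n => norm_nonneg _) (fun n => ?_)
    (((summable_geometric_of_lt_one hρ0 hρ1)).mul_left 4)
  rw [norm_mul, norm_pow, div_pow]
  calc ‖bcoef n‖ * ‖z‖ ^ n ≤ (4 / (2 * Real.pi) ^ n) * ‖z‖ ^ n := by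
        exact mul_le_mul_of_nonneg_right (bcoef_norm n) (by positivity)
    _ = 4 * (‖z‖ ^ n / (2 * Real.pi) ^ n) := by ring

lemma coeffId (n : ℕ) :
    ∑ kl ∈ Finset.HasAntidiagonal.antidiagonal n,
      ((bernoulli kl.1 : ℚ) / (Nat.factorial kl.1) *
        (1 / (Nat.factorial kl.2) - if kl.2 = 0 then 1 else 0))
      = if n = 1 then 1 else 0 := by
  have h := congrArg (PowerSeries.coeff (R := ℚ) n) (bernoulliPowerSeries_mul_exp_sub_one ℚ)
  rw [PowerSeries.coeff_mul, PowerSeries.coeff_X] at h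
  rw [← h]
  refine Finset.sum_congr rfl (fun kl _ => ?_)
  rw [bernoulliPowerSeries, PowerSeries.coeff_mk, map_sub, PowerSeries.coeff_exp,
    PowerSeries.coeff_one]
  simp

lemma bern_cauchy_sum (z : ℂ) (n : ℕ) :
    ∑ kl ∈ Finset.HasAntidiagonal.antidiagonal n,
      (bcoef kl.1 * z ^ kl.1) * (z ^ kl.2 / (Nat.factorial kl.2) - if kl.2 = 0 then 1 else 0)
      = if n = 1 then z else 0 := by
  have h2 : ∑ kl ∈ Finset.HasAntidiagonal.antidiagonal n,
      (((bernoulli kl.1 : ℚ) : ℂ) / (Nat.factorial kl.1) *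
        (1 / (Nat.factorial kl.2) - if kl.2 = 0 then 1 else 0))
      = if n = 1 then 1 else 0 := by
    have := congrArg (fun q : ℚ => (q : ℂ)) (coeffId n)
    push_cast [apply_ite (fun q : ℚ => (q : ℂ))] at this
    exact this
  calc ∑ kl ∈ Finset.HasAntidiagonal.antidiagonal n,
        (bcoef kl.1 * z ^ kl.1) * (z ^ kl.2 / (Nat.factorial kl.2) - if kl.2 = 0 then 1 else 0)
      = ∑ kl ∈ Finset.HasAntidiagonal.antidiagonal n, z ^ n *
          (((bernoulli kl.1 : ℚ) : ℂ) / (Nat.factorial kl.1) *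
            (1 / (Nat.factorial kl.2) - if kl.2 = 0 then 1 else 0)) := by
        refine Finset.sum_congr rfl (fun kl hkl => ?_)
        have hn : kl.1 + kl.2 = n := Finset.HasAntidiagonal.mem_antidiagonal.mp hkl
        rw [← hn, pow_add, bcoef]
        rcases eq_or_ne kl.2 0 with h0 | h0
        · simp [h0]
        · simp only [if_neg h0]
          ring
    _ = z ^ n * (if n = 1 then 1 else 0) := by rw [← Finset.mul_sum, h2]
    _ = if n = 1 then z else 0 := by split <;> simp_all

lemma exp_sub_one_tsum (z : ℂ) :
    Complex.exp z - 1 = ∑' n : ℕ, (z ^ n / (Nat.factorial n) - if n = 0 then 1 else 0) := by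
  have he : Complex.exp z = ∑' n : ℕ, z ^ n / (Nat.factorial n) := by
    rw [Complex.exp_eq_exp_ℂ, NormedSpace.exp_eq_tsum_div]
  have hs1 : Summable (fun n : ℕ => z ^ n / (Nat.factorial n : ℂ)) :=
    NormedSpace.expSeries_div_summable z
  have hs2 : Summable (fun n : ℕ => if n = 0 then (1:ℂ) else 0) :=
    (hasSum_ite_eq 0 (1:ℂ)).summable
  rw [Summable.tsum_sub hs1 hs2, (hasSum_ite_eq 0 (1:ℂ)).tsum_eq, he]

lemma exp_sub_one_norm_summable (z : ℂ) :
    Summable (fun n : ℕ => ‖z ^ n / (Nat.factorial n : ℂ) - if n = 0 then 1 else 0‖) := by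
  refine Summable.of_nonneg_of_le (fun n => norm_nonneg _) (fun n => ?_)
    (Real.summable_pow_div_factorial ‖z‖)
  rcases eq_or_ne n 0 with h | h
  · subst h; simp
  · rw [if_neg h, sub_zero, norm_div, norm_pow, Complex.norm_natCast]

lemma bern_mul_exp (z : ℂ) (hz : ‖z‖ < 2 * Real.pi) :
    (∑' n : ℕ, bcoef n * z ^ n) * (Complex.exp z - 1) = z := by
  rw [exp_sub_one_tsum,
    tsum_mul_tsum_eq_tsum_sum_antidiagonal_of_summable_norm (summable_bern_norm z hz)
      (exp_sub_one_norm_summable z)]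
  calc (∑' n : ℕ, ∑ kl ∈ Finset.HasAntidiagonal.antidiagonal n,
          (bcoef kl.1 * z ^ kl.1) * (z ^ kl.2 / (Nat.factorial kl.2) - if kl.2 = 0 then 1 else 0))
      = ∑' n : ℕ, (if n = 1 then z else 0) := tsum_congr (fun n => bern_cauchy_sum z n)
    _ = z := tsum_ite_eq 1 (fun _ => z)

lemma bern_tsum_eq (z : ℂ) (hz : ‖z‖ < Real.pi) (hz0 : z ≠ 0) :
    (∑' n : ℕ, bcoef n * z ^ n) = z / (Complex.exp z - 1) := by
  have hpi : (0:ℝ) < Real.pi := Real.pi_pos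
  have hexp : Complex.exp z ≠ 1 := by
    intro h1
    obtain ⟨n, hn⟩ := Complex.exp_eq_one_iff.mp h1
    have hnorm : ‖z‖ = |(n:ℝ)| * (2 * Real.pi) := by
      rw [hn]
      simp [abs_mul, mul_assoc, Complex.norm_real, hpi.le]
    rcases eq_or_ne n 0 with h0 | h0
    · exact hz0 (by rw [hn, h0]; simp)
    · have : (1:ℝ) ≤ |(n:ℝ)| := by
        rw [← Int.cast_abs]
        exact_mod_cast Int.one_le_abs h0
      nlinarith
  rw [eq_div_iff (sub_ne_zero.mpr hexp)]
  exact bern_mul_exp z (by nlinarith)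

/-- Euclidean norm of a point of `ℤ^d`. -/
noncomputable def znorm {d : ℕ} (k : Fin d → ℤ) : ℝ :=
  Real.sqrt (∑ i, ((k i : ℝ)) ^ 2)

/-- The `α`-norm of a matrix indexed by `ℤ^d`. -/
noncomputable def anorm {d : ℕ} (α : ℝ) (A : (Fin d → ℤ) → (Fin d → ℤ) → ℂ) : ℝ :=
  ⨆ p : (Fin d → ℤ) × (Fin d → ℤ), ‖A p.1 p.2‖ * (1 + znorm (p.1 - p.2) ^ α)


theorem stmt_13 (d : ℕ) (α δ : ℝ) (hα : (d : ℝ) < α) (hδ : 0 < δ)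
    (lam : (Fin d → ℤ) → ℝ)
    (hlam : ∀ p q, |lam p - lam q| ≤ Real.pi - δ)
    (V : (Fin d → ℤ) → (Fin d → ℤ) → ℂ) (nV : ℝ)
    (hV : ∀ p q, ‖V p q‖ * (1 + znorm (p - q) ^ α) ≤ nV) :
    -- absolute convergence of the series `Z₁ = Σ_k (B_k/k!) iᵏ ad_A^k (V)` in the `α`-norm,
    -- where `(ad_A^n V)_{pq} = (λ_p - λ_q)^n V_{pq}` since `A` is diagonal
    (Summable fun n : ℕ => anorm α
        (fun p q => ((bernoulli n : ℚ) : ℂ) / (Nat.factorial n)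
          * (Complex.I * ((lam p - lam q : ℝ) : ℂ)) ^ n * V p q)) ∧
    (∀ p q, Summable fun n : ℕ =>
        ((bernoulli n : ℚ) : ℂ) / (Nat.factorial n)
          * (Complex.I * ((lam p - lam q : ℝ) : ℂ)) ^ n * V p q) ∧
    (∀ p q, lam p = lam q →
        (∑' n : ℕ, ((bernoulli n : ℚ) : ℂ) / (Nat.factorial n)
          * (Complex.I * ((lam p - lam q : ℝ) : ℂ)) ^ n * V p q) = V p q) ∧
    (∀ p q, lam p ≠ lam q →
        (∑' n : ℕ, ((bernoulli n : ℚ) : ℂ) / (Nat.factorial n)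
          * (Complex.I * ((lam p - lam q : ℝ) : ℂ)) ^ n * V p q)
        = V p q * (Complex.I * ((lam p - lam q : ℝ) : ℂ))
            / (Complex.exp (Complex.I * ((lam p - lam q : ℝ) : ℂ)) - 1)) := by
  have hpi : (0:ℝ) < Real.pi := Real.pi_pos
  have hα0 : (0:ℝ) < α := lt_of_le_of_lt (Nat.cast_nonneg d) hα
  have hr0 : 0 ≤ Real.pi - δ := by
    have h00 := hlam (fun _ => 0) (fun _ => 0)
    simpa using h00
  set ρ := (Real.pi - δ) / (2 * Real.pi) with hρ
  have hρ0 : 0 ≤ ρ := div_nonneg hr0 (by positivity)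
  have hρ1 : ρ < 1 := by rw [hρ, div_lt_one (by positivity)]; linarith
  have hw : ∀ x : Fin d → ℤ, (0:ℝ) ≤ znorm x ^ α :=
    fun x => Real.rpow_nonneg (Real.sqrt_nonneg _) α
  have hzbound : ∀ p q, ‖Complex.I * ((lam p - lam q : ℝ) : ℂ)‖ ≤ Real.pi - δ := by
    intro p q
    rw [norm_mul, Complex.norm_I, one_mul, Complex.norm_real, Real.norm_eq_abs]
    exact hlam p q
  have hNV : 0 ≤ nV := by
    have h0 : znorm ((fun _ => 0 : Fin d → ℤ) - (fun _ => 0)) = 0 := by simp [znorm]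
    have h1 := hV (fun _ => 0) (fun _ => 0)
    rw [h0, Real.zero_rpow (ne_of_gt hα0)] at h1
    have := norm_nonneg (V (fun _ => 0) (fun _ => 0))
    linarith
  have hterm : ∀ (n : ℕ) (p q : Fin d → ℤ),
      ‖bcoef n * (Complex.I * ((lam p - lam q : ℝ) : ℂ)) ^ n * V p q‖
        * (1 + znorm (p - q) ^ α) ≤ 4 * nV * ρ ^ n := by
    intro n p q
    have h1 : ‖bcoef n * (Complex.I * ((lam p - lam q : ℝ) : ℂ)) ^ n * V p q‖
        * (1 + znorm (p - q) ^ α)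
        = (‖bcoef n‖ * ‖Complex.I * ((lam p - lam q : ℝ) : ℂ)‖ ^ n)
          * (‖V p q‖ * (1 + znorm (p - q) ^ α)) := by
      rw [norm_mul, norm_mul, norm_pow]; ring
    rw [h1]
    have h2 : ‖bcoef n‖ * ‖Complex.I * ((lam p - lam q : ℝ) : ℂ)‖ ^ n
        ≤ (4 / (2 * Real.pi) ^ n) * (Real.pi - δ) ^ n :=
      mul_le_mul (bcoef_norm n) (pow_le_pow_left₀ (norm_nonneg _) (hzbound p q) n)
        (by positivity) (by positivity)
    have h3 : ‖V p q‖ * (1 + znorm (p - q) ^ α) ≤ nV := hV p q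
    have h4 : (0:ℝ) ≤ ‖V p q‖ * (1 + znorm (p - q) ^ α) :=
      mul_nonneg (norm_nonneg _) (by linarith [hw (p - q)])
    calc (‖bcoef n‖ * ‖Complex.I * ((lam p - lam q : ℝ) : ℂ)‖ ^ n)
          * (‖V p q‖ * (1 + znorm (p - q) ^ α))
        ≤ ((4 / (2 * Real.pi) ^ n) * (Real.pi - δ) ^ n) * nV :=
          mul_le_mul h2 h3 h4 (by positivity)
      _ = 4 * nV * ρ ^ n := by rw [hρ, div_pow]; ring
  refine ⟨?_, ?_, ?_, ?_⟩
  · refine Summable.of_nonneg_of_le (fun n => ?_) (fun n => ?_)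
      ((summable_geometric_of_lt_one hρ0 hρ1).mul_left (4 * nV))
    · exact Real.iSup_nonneg fun pq =>
        mul_nonneg (norm_nonneg _) (by linarith [hw (pq.1 - pq.2)])
    · rw [anorm]
      exact ciSup_le fun pq => hterm n pq.1 pq.2
  · intro p q
    have hz2 : ‖Complex.I * ((lam p - lam q : ℝ) : ℂ)‖ < 2 * Real.pi :=
      lt_of_le_of_lt (hzbound p q) (by linarith)
    exact ((summable_bern_norm _ hz2).of_norm).mul_right (V p q)
  · intro p q h
    have hz : ((lam p - lam q : ℝ) : ℂ) = 0 := by rw [h, sub_self, Complex.ofReal_zero]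
    rw [tsum_eq_single 0 (fun b hb => by simp [hz, zero_pow hb])]
    norm_num [hz, bernoulli_zero]
  · intro p q hne
    set z := Complex.I * ((lam p - lam q : ℝ) : ℂ) with hzdef
    have hz0 : z ≠ 0 := by
      refine mul_ne_zero Complex.I_ne_zero ?_
      simpa [Complex.ofReal_eq_zero, sub_eq_zero] using hne
    have hzπ : ‖z‖ < Real.pi := lt_of_le_of_lt (hzbound p q) (by linarith)
    have h := bern_tsum_eq z hzπ hz0
    calc (∑' n : ℕ, ((bernoulli n : ℚ) : ℂ) / (Nat.factorial n) * z ^ n * V p q)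
        = (∑' n : ℕ, bcoef n * z ^ n) * V p q := tsum_mul_right
      _ = z / (Complex.exp z - 1) * V p q := by rw [h]
      _ = V p q * z / (Complex.exp z - 1) := by ring
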